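/- For all real numbers A₁, A₂, A₃, A₄, A₅, A₆ > 0, the Hopf-link volume-simplicity conditions A₁·A₆ = A₂·A₅ and A₂·A₅ = A₃·A₄ hold if and only if there exist real numbers Ex, Ey, Ez, Et > 0 with A₁ = Ey·Ez, A₂ = Ez·Ex, A₃ = Ex·Ey, A₄ = Ez·Et, A₅ = Et·Ey, and A₆ = Ex·Et. -/

import Mathlib

/-- Hopf-link volume simplicity for the hypercuboid: the conditions
`A₁A₆ = A₂A₅ = A₃A₄` on six positive areas hold iff they come from four positive
edge lengths of a geometric hypercuboid. -/
theorem hypercuboid_reconstruction (A₁ A₂ A₃ A₄ A₅ A₆ : ℝ)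
    (h₁ : 0 < A₁) (h₂ : 0 < A₂) (h₃ : 0 < A₃)
    (h₄ : 0 < A₄) (h₅ : 0 < A₅) (h₆ : 0 < A₆) :
    (A₁ * A₆ = A₂ * A₅ ∧ A₂ * A₅ = A₃ * A₄) ↔
    ∃ Ex Ey Ez Et : ℝ, 0 < Ex ∧ 0 < Ey ∧ 0 < Ez ∧ 0 < Et ∧
      A₁ = Ey * Ez ∧ A₂ = Ez * Ex ∧ A₃ = Ex * Ey ∧
      A₄ = Ez * Et ∧ A₅ = Et * Ey ∧ A₆ = Ex * Et := by
  constructor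
  · rintro ⟨e16, e25⟩
    set Ex := Real.sqrt (A₂ * A₃ / A₁) with hEx
    set Ey := Real.sqrt (A₁ * A₃ / A₂) with hEy
    set Ez := Real.sqrt (A₁ * A₂ / A₃) with hEz
    have hxpos : 0 < Ex := Real.sqrt_pos.2 (by positivity)
    have hypos : 0 < Ey := Real.sqrt_pos.2 (by positivity)
    have hzpos : 0 < Ez := Real.sqrt_pos.2 (by positivity)
    have hyz : Ey * Ez = A₁ := by
      rw [hEy, hEz, ← Real.sqrt_mul (by positivity)]
      rw [show A₁ * A₃ / A₂ * (A₁ * A₂ / A₃) = A₁ ^ 2 by field_simp]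
      exact Real.sqrt_sq h₁.le
    have hzx : Ez * Ex = A₂ := by
      rw [hEz, hEx, ← Real.sqrt_mul (by positivity)]
      rw [show A₁ * A₂ / A₃ * (A₂ * A₃ / A₁) = A₂ ^ 2 by field_simp]
      exact Real.sqrt_sq h₂.le
    have hxy : Ex * Ey = A₃ := by
      rw [hEx, hEy, ← Real.sqrt_mul (by positivity)]
      rw [show A₂ * A₃ / A₁ * (A₁ * A₃ / A₂) = A₃ ^ 2 by field_simp]
      exact Real.sqrt_sq h₃.le
    refine ⟨Ex, Ey, Ez, A₄ / Ez, hxpos, hypos, hzpos, by positivity,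
      hyz.symm, hzx.symm, hxy.symm, by field_simp, ?_, ?_⟩
    · -- A₅ = (A₄/Ez) * Ey
      have : A₂ * A₅ = A₂ * (A₄ / Ez * Ey) := by
        rw [e25]
        have key : A₃ * Ez = A₂ * Ey := by rw [← hxy, ← hzx]; ring
        field_simp
        linear_combination key
      exact mul_left_cancel₀ h₂.ne' this
    · have : A₁ * A₆ = A₁ * (Ex * (A₄ / Ez)) := by
        rw [e16, e25]
        have key : A₃ * Ez = A₁ * Ex := by rw [← hxy, ← hyz]; ring
        field_simp
        linear_combination key
      exact mul_left_cancel₀ h₁.ne' this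
  · rintro ⟨Ex, Ey, Ez, Et, hx, hy, hz, ht, rfl, rfl, rfl, rfl, rfl, rfl⟩
    constructor <;> ring
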